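/- arXiv:0807.5094 — 5 statements merged into one kernel-verified Lean document; each statement's English description precedes it below -/
import Mathlib

section
/- Every real g-row stochastic matrix R ∈ M_n(ℝ) can be written as R = Σᵢ rᵢ Rᵢ, where the Rᵢ are (entrywise nonnegative) row stochastic matrices and the rᵢ are real scalars with Σᵢ rᵢ = 1. -/
open Matrix

def GRowStochastic {n : ℕ} (R : Matrix (Fin n) (Fin n) ℝ) : Prop :=
  R *ᵥ (1 : Fin n → ℝ) = 1

def RowStochastic {n : ℕ} (R : Matrix (Fin n) (Fin n) ℝ) : Prop :=
  (∀ i j, 0 ≤ R i j) ∧ R *ᵥ (1 : Fin n → ℝ) = 1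

def GwMaj {n m : ℕ} (X Y : Matrix (Fin n) (Fin m) ℝ) : Prop :=
  ∃ R : Matrix (Fin n) (Fin n) ℝ, GRowStochastic R ∧ Y = R * X

def MatMaj {n m : ℕ} (X Y : Matrix (Fin n) (Fin m) ℝ) : Prop :=
  ∃ R : Matrix (Fin n) (Fin n) ℝ, RowStochastic R ∧ Y = R * X

theorem stmt_14 {n : ℕ} (R : Matrix (Fin n) (Fin n) ℝ) (hR : GRowStochastic R) :
    ∃ (k : ℕ) (r : Fin k → ℝ) (S : Fin k → Matrix (Fin n) (Fin n) ℝ),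
      (∀ i, RowStochastic (S i)) ∧ (∑ i, r i) = 1 ∧ R = ∑ i, r i • S i := by
  rcases Nat.eq_zero_or_pos n with hn | hn
  · subst hn
    refine ⟨1, fun _ => 1, fun _ => 0, ?_, by simp, ?_⟩
    · intro i
      constructor
      · intro i; exact absurd i.2 (by simp)
      · funext i; exact absurd i.2 (by simp)
    · funext i; exact absurd i.2 (by simp)
  · have hnR : (0:ℝ) < n := by exact_mod_cast hn
    set M : ℝ := ∑ i, ∑ j, |R i j| with hM
    have hM0 : 0 ≤ M := Finset.sum_nonneg fun i _ =>
      Finset.sum_nonneg fun j _ => abs_nonneg _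
    have hMb : ∀ i j, |R i j| ≤ M := by
      intro i j
      calc |R i j| ≤ ∑ j, |R i j| := Finset.single_le_sum (f := fun j => |R i j|)
            (fun j _ => abs_nonneg _) (Finset.mem_univ j)
        _ ≤ M := Finset.single_le_sum (f := fun i => ∑ j, |R i j|)
            (fun i _ => Finset.sum_nonneg fun j _ => abs_nonneg _) (Finset.mem_univ i)
    set t : ℝ := n * M with ht
    have ht0 : 0 ≤ t := mul_nonneg hnR.le hM0
    have h1t : (0:ℝ) < 1 + t := by linarith
    set J : Matrix (Fin n) (Fin n) ℝ := fun _ _ => (n:ℝ)⁻¹ with hJ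
    have hJrow : J *ᵥ (1 : Fin n → ℝ) = 1 := by
      funext i
      simp [mulVec, dotProduct, hJ, Finset.card_univ]
      field_simp
    have hJRS : RowStochastic J := ⟨fun i j => by positivity, hJrow⟩
    have hrowsum : ∀ i, ∑ j, R i j = 1 := by
      intro i
      have := congrFun hR i
      simpa [mulVec, dotProduct] using this
    set S1 : Matrix (Fin n) (Fin n) ℝ := (1 + t)⁻¹ • (R + t • J) with hS1
    have hS1RS : RowStochastic S1 := by
      constructor
      · intro i j
        have h1 : t * (n:ℝ)⁻¹ = M := by
          rw [ht]; field_simp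
        have h2 : -R i j ≤ M := (neg_le_abs _).trans (hMb i j)
        have : 0 ≤ R i j + t * (n:ℝ)⁻¹ := by rw [h1]; linarith
        simp only [hS1, Matrix.smul_apply, Matrix.add_apply, smul_eq_mul]
        exact mul_nonneg (inv_nonneg.mpr h1t.le) (by simpa [hJ] using this)
      · have hR' : R *ᵥ 1 = 1 := hR
        funext i
        simp only [hS1, Matrix.smul_mulVec, Matrix.add_mulVec, hR',
          Matrix.smul_mulVec, hJrow]
        simp only [Pi.smul_apply, Pi.add_apply, Pi.one_apply, smul_eq_mul, mul_one]
        field_simp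
    refine ⟨2, ![1 + t, -t], ![S1, J], ?_, by simp, ?_⟩
    · intro i
      fin_cases i
      · simpa using hS1RS
      · simpa using hJRS
    · have : (1 + t) • S1 = R + t • J := by
        rw [hS1, smul_smul, mul_inv_cancel₀ (ne_of_gt h1t), one_smul]
      rw [Fin.sum_univ_two]
      simp only [Matrix.cons_val_zero, Matrix.cons_val_one, Matrix.head_cons]
      rw [this]
      module
end

section
/- If a linear operator T : M_{n,m}(ℝ) → M_{n,m}(ℝ) strongly preserves matrix majorization, then T strongly preserves gw-majorization. -/
set_option linter.unnecessarySimpa false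

open Matrix

lemma sum_rows_iff {n : ℕ} (M : Matrix (Fin n) (Fin n) ℝ) :
    M *ᵥ (1 : Fin n → ℝ) = 1 ↔ ∀ i, ∑ j, M i j = 1 := by
  constructor
  · intro h i
    have := congrFun h i
    simpa [Matrix.mulVec, dotProduct] using this
  · intro h
    funext i
    simpa [Matrix.mulVec, dotProduct] using h i

lemma gwmaj_forward {n m : ℕ}
    (T : Matrix (Fin n) (Fin m) ℝ →ₗ[ℝ] Matrix (Fin n) (Fin m) ℝ)
    (hT : ∀ X Y, MatMaj X Y ↔ MatMaj (T X) (T Y))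
    (X Y : Matrix (Fin n) (Fin m) ℝ) (h : GwMaj X Y) : GwMaj (T X) (T Y) := by
  rcases Nat.eq_zero_or_pos n with hn | hn
  · subst hn
    refine ⟨1, ?_, ?_⟩
    · funext i; exact i.elim0
    · ext i j; exact i.elim0
  obtain ⟨R, hR, hY⟩ := h
  have hnR : (0:ℝ) < n := by exact_mod_cast hn
  set t : ℝ := n * ∑ i, ∑ j, |R i j| with ht
  have hsum_nonneg : (0:ℝ) ≤ ∑ i, ∑ j, |R i j| :=
    Finset.sum_nonneg fun _ _ => Finset.sum_nonneg fun _ _ => abs_nonneg _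
  have ht0 : 0 ≤ t := mul_nonneg hnR.le hsum_nonneg
  have h1t : (0:ℝ) < 1 + t := by linarith
  have hRsum : ∀ i, ∑ j, R i j = 1 := (sum_rows_iff R).1 hR
  obtain ⟨J, hJ⟩ : ∃ J : Matrix (Fin n) (Fin n) ℝ, J = Matrix.of (fun _ _ => 1) := ⟨_, rfl⟩
  obtain ⟨E, hE⟩ : ∃ E : Matrix (Fin n) (Fin n) ℝ, E = (n:ℝ)⁻¹ • J := ⟨_, rfl⟩
  obtain ⟨S, hS⟩ : ∃ S : Matrix (Fin n) (Fin n) ℝ, S = (1+t)⁻¹ • (R + (t/n) • J) := ⟨_, rfl⟩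
  have htn : t / n = ∑ i, ∑ j, |R i j| := by
    rw [ht]; field_simp
  have hEntry : ∀ i j, 0 ≤ R i j + t / n := by
    intro i j
    have h1 : |R i j| ≤ ∑ i', ∑ j', |R i' j'| := by
      calc |R i j| ≤ ∑ j', |R i j'| :=
            Finset.single_le_sum (f := fun j' => |R i j'|)
              (fun _ _ => abs_nonneg _) (Finset.mem_univ j)
        _ ≤ ∑ i', ∑ j', |R i' j'| :=
            Finset.single_le_sum (f := fun i' => ∑ j', |R i' j'|)
              (fun i' _ => Finset.sum_nonneg fun _ _ => abs_nonneg _) (Finset.mem_univ i)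
    have h2 := neg_abs_le (R i j)
    rw [htn]; linarith
  have hSstoch : RowStochastic S := by
    constructor
    · intro i j
      have : S i j = (1+t)⁻¹ * (R i j + t/n) := by
        simp [hS, hJ, Matrix.add_apply, Matrix.smul_apply, div_eq_mul_inv, mul_add]
      rw [this]
      exact mul_nonneg (inv_nonneg.2 h1t.le) (hEntry i j)
    · rw [sum_rows_iff]
      intro i
      have : ∀ j, S i j = (1+t)⁻¹ * (R i j + t/n) := by
        intro j
        simp [hS, hJ, Matrix.add_apply, Matrix.smul_apply, div_eq_mul_inv, mul_add]
      simp only [this]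
      rw [← Finset.mul_sum, Finset.sum_add_distrib, hRsum i, Finset.sum_const,
        Finset.card_univ, Fintype.card_fin, nsmul_eq_mul]
      field_simp
  have hEstoch : RowStochastic E := by
    constructor
    · intro i j
      have : E i j = (n:ℝ)⁻¹ := by simp [hE, hJ]
      rw [this]; positivity
    · rw [sum_rows_iff]
      intro i
      have : ∀ j, E i j = (n:ℝ)⁻¹ := by intro j; simp [hE, hJ]
      simp only [this]
      rw [Finset.sum_const, Finset.card_univ, Fintype.card_fin, nsmul_eq_mul]
      field_simp
  obtain ⟨S', hS', hS'eq⟩ := (hT X (S * X)).1 ⟨S, hSstoch, rfl⟩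
  obtain ⟨E', hE', hE'eq⟩ := (hT X (E * X)).1 ⟨E, hEstoch, rfl⟩
  have hRdecomp : (1+t) • S - t • E = R := by
    rw [hS, hE, smul_smul, smul_smul, mul_inv_cancel₀ h1t.ne', one_smul, ← div_eq_mul_inv]
    exact add_sub_cancel_right R _
  refine ⟨(1+t) • S' - t • E', ?_, ?_⟩
  · show ((1+t) • S' - t • E') *ᵥ (1 : Fin n → ℝ) = 1
    rw [sum_rows_iff]
    intro i
    have h1 := (sum_rows_iff S').1 hS'.2 i
    have h2 := (sum_rows_iff E').1 hE'.2 i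
    simp only [Matrix.sub_apply, Matrix.smul_apply, smul_eq_mul, Finset.sum_sub_distrib,
      ← Finset.mul_sum, h1, h2]
    ring
  · have hmul : ((1+t) • S - t • E) * X = (1+t) • (S * X) - t • (E * X) := by
      rw [Matrix.sub_mul, Matrix.smul_mul, Matrix.smul_mul]
    calc T Y = T ((1+t) • (S * X) - t • (E * X)) := by
          rw [hY, ← hRdecomp, hmul]
      _ = (1+t) • T (S * X) - t • T (E * X) := by
          rw [map_sub, LinearMap.map_smul, LinearMap.map_smul]
      _ = ((1+t) • S' - t • E') * T X := by
          rw [hS'eq, hE'eq, Matrix.sub_mul, Matrix.smul_mul, Matrix.smul_mul]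

theorem stmt_15 {n m : ℕ}
    (T : Matrix (Fin n) (Fin m) ℝ →ₗ[ℝ] Matrix (Fin n) (Fin m) ℝ)
    (hT : ∀ X Y, MatMaj X Y ↔ MatMaj (T X) (T Y)) :
    ∀ X Y, GwMaj X Y ↔ GwMaj (T X) (T Y) := by
  have hone : RowStochastic (1 : Matrix (Fin n) (Fin n) ℝ) := by
    constructor
    · intro i j
      by_cases h : i = j <;> simp [Matrix.one_apply, h]
    · exact Matrix.one_mulVec _
  have hinj : Function.Injective T := by
    rw [injective_iff_map_eq_zero]
    intro Z hZ
    have h0 : MatMaj (T 0) (T Z) := by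
      rw [map_zero, hZ]
      exact ⟨1, hone, by simp⟩
    obtain ⟨R, hR, hZ0⟩ := (hT 0 Z).2 h0
    simp at hZ0; exact hZ0
  have hsurj : Function.Surjective T := LinearMap.injective_iff_surjective.1 hinj
  let e := LinearEquiv.ofBijective T ⟨hinj, hsurj⟩
  have heT : ∀ U, T (e.symm U) = U := by
    intro U
    have := e.apply_symm_apply U
    exact this
  have hT' : ∀ U V, MatMaj U V ↔ MatMaj (e.symm.toLinearMap U) (e.symm.toLinearMap V) := by
    intro U V
    have h := hT (e.symm U) (e.symm V)
    rw [heT U, heT V] at h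
    exact h.symm
  intro X Y
  constructor
  · exact gwmaj_forward T hT X Y
  · intro h
    have := gwmaj_forward e.symm.toLinearMap hT' (T X) (T Y) h
    have hX : e.symm.toLinearMap (T X) = X := by
      exact e.symm_apply_apply X
    have hY : e.symm.toLinearMap (T Y) = Y := by
      exact e.symm_apply_apply Y
    rwa [hX, hY] at this
end

section
/- The linear operator T : M_2(ℝ) → M_2(ℝ) given by T(X) = AX with A = [[1,0],[−1,2]] strongly preserves gw-majorization but does not strongly preserve matrix majorization; in particular, with X = [[1,0],[0,0]] and Y = [[0,0],[1,0]], one has X ≻ Y but not T(X) ≻ T(Y). -/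
open Matrix

lemma gw_push (A B : Matrix (Fin 2) (Fin 2) ℝ) (hBA : B * A = 1)
    (hA : A *ᵥ (1 : Fin 2 → ℝ) = 1) (hB : B *ᵥ (1 : Fin 2 → ℝ) = 1)
    (X Y : Matrix (Fin 2) (Fin 2) ℝ) (h : GwMaj X Y) : GwMaj (A * X) (A * Y) := by
  obtain ⟨R, hR, hY⟩ := h
  refine ⟨A * R * B, ?_, ?_⟩
  · unfold GRowStochastic at *
    rw [← Matrix.mulVec_mulVec, ← Matrix.mulVec_mulVec, hB, hR, hA]
  · rw [hY, Matrix.mul_assoc, Matrix.mul_assoc, ← Matrix.mul_assoc B, hBA,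
      Matrix.one_mul, ← Matrix.mul_assoc]

theorem stmt_16 :
    (∀ X Y : Matrix (Fin 2) (Fin 2) ℝ,
        GwMaj X Y ↔ GwMaj (!![1, 0; -1, 2] * X) (!![1, 0; -1, 2] * Y)) ∧
    ¬ (∀ X Y : Matrix (Fin 2) (Fin 2) ℝ,
        MatMaj X Y ↔ MatMaj (!![1, 0; -1, 2] * X) (!![1, 0; -1, 2] * Y)) ∧
    MatMaj !![(1 : ℝ), 0; 0, 0] !![(0 : ℝ), 0; 1, 0] ∧
    ¬ MatMaj (!![1, 0; -1, 2] * !![(1 : ℝ), 0; 0, 0])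
             (!![1, 0; -1, 2] * !![(0 : ℝ), 0; 1, 0]) := by
  set A : Matrix (Fin 2) (Fin 2) ℝ := !![1, 0; -1, 2] with hAdef
  set B : Matrix (Fin 2) (Fin 2) ℝ := !![1, 0; 1/2, 1/2] with hBdef
  have hBA : B * A = 1 := by
    ext i j
    fin_cases i <;> fin_cases j <;>
      simp [hAdef, hBdef, Matrix.mul_apply, Fin.sum_univ_two] <;> norm_num
  have hAB : A * B = 1 := by
    ext i j
    fin_cases i <;> fin_cases j <;>
      simp [hAdef, hBdef, Matrix.mul_apply, Fin.sum_univ_two] <;> norm_num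
  have hA1 : A *ᵥ (1 : Fin 2 → ℝ) = 1 := by
    funext i
    fin_cases i <;>
      simp [hAdef, Matrix.mulVec, dotProduct, Fin.sum_univ_two] <;> norm_num
  have hB1 : B *ᵥ (1 : Fin 2 → ℝ) = 1 := by
    funext i
    fin_cases i <;>
      simp [hBdef, Matrix.mulVec, dotProduct, Fin.sum_univ_two] <;> norm_num
  have hgw : ∀ X Y : Matrix (Fin 2) (Fin 2) ℝ, GwMaj X Y ↔ GwMaj (A * X) (A * Y) := by
    intro X Y
    constructor
    · exact gw_push A B hBA hA1 hB1 X Y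
    · intro h
      have := gw_push B A hAB hB1 hA1 _ _ h
      rwa [← Matrix.mul_assoc, ← Matrix.mul_assoc, hBA, Matrix.one_mul,
        Matrix.one_mul] at this
  have hmm : MatMaj !![(1 : ℝ), 0; 0, 0] !![(0 : ℝ), 0; 1, 0] := by
    refine ⟨!![0, 1; 1, 0], ⟨?_, ?_⟩, ?_⟩
    · intro i j; fin_cases i <;> fin_cases j <;> norm_num
    · funext i
      fin_cases i <;> simp [Matrix.mulVec, dotProduct, Fin.sum_univ_two]
    · ext i j
      fin_cases i <;> fin_cases j <;> simp [Matrix.mul_apply, Fin.sum_univ_two]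
  have hnot : ¬ MatMaj (A * !![(1 : ℝ), 0; 0, 0]) (A * !![(0 : ℝ), 0; 1, 0]) := by
    rintro ⟨R, ⟨hnn, hrs⟩, hY⟩
    have h10 : (A * !![(0 : ℝ), 0; 1, 0]) 1 0 = (R * (A * !![(1 : ℝ), 0; 0, 0])) 1 0 := by
      rw [← hY]
    have e1 : (A * !![(0 : ℝ), 0; 1, 0]) 1 0 = 2 := by
      simp [hAdef, Matrix.mul_apply, Fin.sum_univ_two]
    have e2 : (R * (A * !![(1 : ℝ), 0; 0, 0])) 1 0 = R 1 0 - R 1 1 := by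
      simp [hAdef, Matrix.mul_apply, Fin.sum_univ_two]
      ring
    have hsum : R 1 0 + R 1 1 = 1 := by
      have := congrFun hrs 1
      simpa [Matrix.mulVec, dotProduct, Fin.sum_univ_two] using this
    have h0 := hnn 1 1
    rw [e1, e2] at h10
    linarith
  exact ⟨hgw, fun h => hnot ((h _ _).mp hmm), hmm, hnot⟩
end

section
/- A linear operator T : M_n(ℝ) → M_n(ℝ) strongly preserves matrix majorization if and only if T(X) = PXL for some permutation matrix P and some invertible matrix L ∈ M_n(ℝ). -/
open Matrix

namespace Stmt17

variable {n : ℕ}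

/-- the matrix all whose rows are `a` -/
def rep (a : Fin n → ℝ) : Matrix (Fin n) (Fin n) ℝ := Matrix.of fun _ j => a j

@[simp] lemma rep_apply (a : Fin n → ℝ) (i j) : rep a i j = a j := rfl

lemma rowStochastic_sum {R : Matrix (Fin n) (Fin n) ℝ} (hR : RowStochastic R) (i : Fin n) :
    ∑ k, R i k = 1 := by
  have := congrFun hR.2 i
  simpa [Matrix.mulVec, dotProduct] using this

lemma rowStochastic_one : RowStochastic (1 : Matrix (Fin n) (Fin n) ℝ) := by
  constructor
  · intro i j
    by_cases h : i = j <;> simp [Matrix.one_apply, h]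
  · exact Matrix.one_mulVec _

lemma rowStochastic_mul {R S : Matrix (Fin n) (Fin n) ℝ} (hR : RowStochastic R)
    (hS : RowStochastic S) : RowStochastic (R * S) := by
  constructor
  · intro i j
    rw [Matrix.mul_apply]
    exact Finset.sum_nonneg fun k _ => mul_nonneg (hR.1 i k) (hS.1 k j)
  · rw [← Matrix.mulVec_mulVec, hS.2, hR.2]

lemma rowStochastic_permMatrix (σ : Equiv.Perm (Fin n)) :
    RowStochastic (σ.permMatrix ℝ) := by
  constructor
  · intro i j
    by_cases h : σ i = j <;>
      simp [Equiv.Perm.permMatrix, PEquiv.toMatrix_apply, Equiv.toPEquiv_apply, h]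
  · funext i
    simp [Matrix.mulVec, dotProduct, Equiv.Perm.permMatrix, PEquiv.toMatrix_apply,
      Equiv.toPEquiv_apply]

lemma permMatrix_mul_symm (σ : Equiv.Perm (Fin n)) :
    σ.permMatrix ℝ * Equiv.Perm.permMatrix ℝ σ.symm = 1 := by
  show σ.toPEquiv.toMatrix * σ.symm.toPEquiv.toMatrix = 1
  rw [← PEquiv.toMatrix_trans, ← Equiv.toPEquiv_trans, Equiv.self_trans_symm,
    Equiv.toPEquiv_refl, PEquiv.toMatrix_refl]

lemma symm_mul_permMatrix (σ : Equiv.Perm (Fin n)) :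
    Equiv.Perm.permMatrix ℝ σ.symm * σ.permMatrix ℝ = 1 := by
  simpa using permMatrix_mul_symm σ.symm

lemma permMatrix_injective {σ τ : Equiv.Perm (Fin n)}
    (h : σ.permMatrix ℝ = τ.permMatrix ℝ) : σ = τ := by
  apply Equiv.ext
  intro i
  have := congrFun (congrFun h i) (σ i)
  simp only [Equiv.Perm.permMatrix, PEquiv.toMatrix_apply, Equiv.toPEquiv_apply,
    Option.mem_def, Option.some.injEq] at this
  by_cases hh : τ i = σ i
  · exact hh.symm
  · simp [hh] at this

lemma mul_rep {R : Matrix (Fin n) (Fin n) ℝ} (h : ∀ i, ∑ k, R i k = 1) (a : Fin n → ℝ) :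
    R * rep a = rep a := by
  ext i j
  simp [Matrix.mul_apply, ← Finset.sum_mul, h i]

lemma rep_mul (b : Fin n → ℝ) (C : Matrix (Fin n) (Fin n) ℝ) :
    rep b * C = rep (b ᵥ* C) := by
  ext i j
  simp [Matrix.mul_apply, Matrix.vecMul, dotProduct]

lemma matmaj_rep_row (X : Matrix (Fin n) (Fin n) ℝ) (i : Fin n) : MatMaj X (rep (X i)) := by
  refine ⟨Matrix.of fun _ k => if k = i then 1 else 0, ⟨?_, ?_⟩, ?_⟩
  · intro r k
    dsimp only [Matrix.of_apply]
    split <;> norm_num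
  · funext r
    simp [Matrix.mulVec, dotProduct]
  · ext r j
    simp [Matrix.mul_apply]

lemma matmaj_of_forall_rep {W Z : Matrix (Fin n) (Fin n) ℝ}
    (h : ∀ j, MatMaj W (rep (Z j))) : MatMaj W Z := by
  choose R hR hZ using h
  refine ⟨Matrix.of fun j k => R j j k, ⟨fun i j => (hR i).1 i j, ?_⟩, ?_⟩
  · funext i
    have := congrFun (hR i).2 i
    simpa [Matrix.mulVec, dotProduct] using this
  · ext j m
    have := congrFun (congrFun (hZ j) j) m
    simp only [rep_apply, Matrix.mul_apply] at this ⊢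
    simpa using this

lemma matmaj_mul_unit_iff {X Y C : Matrix (Fin n) (Fin n) ℝ} (hC : IsUnit C) :
    MatMaj (X * C) (Y * C) ↔ MatMaj X Y := by
  have hdet : IsUnit C.det := (Matrix.isUnit_iff_isUnit_det C).mp hC
  constructor
  · rintro ⟨R, hR, hYC⟩
    refine ⟨R, hR, ?_⟩
    have : Y * C * C⁻¹ = R * (X * C) * C⁻¹ := by rw [hYC]
    rwa [Matrix.mul_assoc Y C C⁻¹, Matrix.mul_nonsing_inv _ hdet, Matrix.mul_one,
      Matrix.mul_assoc R (X * C) C⁻¹, Matrix.mul_assoc X C C⁻¹,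
      Matrix.mul_nonsing_inv _ hdet, Matrix.mul_one] at this
  · rintro ⟨R, hR, hY⟩
    exact ⟨R, hR, by rw [hY, Matrix.mul_assoc]⟩


lemma perm_of_stochastic_mul_eq_one {S M : Matrix (Fin n) (Fin n) ℝ}
    (hS : RowStochastic S) (hM : RowStochastic M) (h : S * M = 1) :
    ∃ σ : Equiv.Perm (Fin n), M = σ.permMatrix ℝ := by
  have hMle : ∀ j k, M j k ≤ 1 := by
    intro j k
    calc M j k ≤ ∑ k', M j k' :=
          Finset.single_le_sum (fun k' _ => hM.1 j k') (Finset.mem_univ k)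
      _ = 1 := rowStochastic_sum hM j
  have key : ∀ i j, S i j = 0 ∨ M j i = 1 := by
    intro i j
    have h1 : ∑ j', S i j' * M j' i = 1 := by
      have := congrFun (congrFun h i) i
      simpa [Matrix.mul_apply, Matrix.one_apply] using this
    have h2 : ∑ j', S i j' * (1 - M j' i) = 0 := by
      have hs := rowStochastic_sum hS i
      calc ∑ j', S i j' * (1 - M j' i) = ∑ j', (S i j' - S i j' * M j' i) := by
            congr 1; funext j'; ring
        _ = (∑ j', S i j') - ∑ j', S i j' * M j' i := Finset.sum_sub_distrib _ _
        _ = 0 := by rw [hs, h1]; ring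
    have hterm : ∀ j' ∈ Finset.univ, S i j' * (1 - M j' i) = 0 :=
      (Finset.sum_eq_zero_iff_of_nonneg (fun j' _ =>
        mul_nonneg (hS.1 i j') (by linarith [hMle j' i]))).mp h2
    have := hterm j (Finset.mem_univ j)
    rcases mul_eq_zero.mp this with h0 | h0
    · exact Or.inl h0
    · exact Or.inr (by linarith)
  have hex : ∀ i, ∃ j, S i j ≠ 0 := by
    intro i
    by_contra hc
    push_neg at hc
    have := rowStochastic_sum hS i
    rw [Finset.sum_eq_zero (fun j _ => hc j)] at this
    norm_num at this
  choose f hf using hex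
  have hMf : ∀ i, M (f i) i = 1 := fun i => (key i (f i)).resolve_left (hf i)
  have hrow : ∀ i k, M (f i) k = if k = i then 1 else 0 := by
    intro i k
    by_cases hk : k = i
    · simp [hk, hMf i]
    · have hs := rowStochastic_sum hM (f i)
      have herase : ∑ k' ∈ Finset.univ.erase i, M (f i) k' = 0 := by
        have h3 := Finset.add_sum_erase Finset.univ (fun k' => M (f i) k') (Finset.mem_univ i)
        have h4 := hMf i
        rw [← h3, h4] at hs
        linarith
      have := (Finset.sum_eq_zero_iff_of_nonneg (fun k' _ => hM.1 (f i) k')).mp herase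
      simp [hk, this k (Finset.mem_erase.mpr ⟨hk, Finset.mem_univ k⟩)]
  have hinj : Function.Injective f := by
    intro i i' hii
    by_contra hne
    have h1 := hrow i i'
    rw [hii, hrow i' i', if_pos rfl] at h1
    rw [if_neg (Ne.symm hne)] at h1
    exact zero_ne_one h1.symm
  have hbij : Function.Bijective f := (Finite.injective_iff_bijective).mp hinj
  let σ : Equiv.Perm (Fin n) := Equiv.ofBijective f hbij
  refine ⟨σ.symm, ?_⟩
  ext j k
  have hj : j = f (σ.symm j) := (σ.apply_symm_apply j).symm
  rw [hj]
  rw [hrow (σ.symm j) k]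
  have : σ.symm (f (σ.symm j)) = σ.symm j := by
    rw [← hj]
  simp only [Equiv.Perm.permMatrix, PEquiv.toMatrix_apply, Equiv.toPEquiv_apply,
    Option.mem_def, Option.some.injEq, ← hj, this]
  by_cases hk : k = σ.symm j
  · simp [hk]
  · simp [hk, Ne.symm hk]


lemma rep_eq_sum (a : Fin n → ℝ) :
    rep a = ∑ k, a k • rep (fun j => if k = j then 1 else 0) := by
  ext i j
  simp [Matrix.sum_apply]

end Stmt17

open Stmt17 in
theorem stmt_17 {n : ℕ} (hn : 2 ≤ n)
    (T : Matrix (Fin n) (Fin n) ℝ →ₗ[ℝ] Matrix (Fin n) (Fin n) ℝ) :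
    (∀ X Y, MatMaj X Y ↔ MatMaj (T X) (T Y)) ↔
      ∃ (σ : Equiv.Perm (Fin n)) (L : Matrix (Fin n) (Fin n) ℝ),
        IsUnit L ∧ ∀ X, T X = σ.permMatrix ℝ * X * L := by
  constructor
  · intro hT
    have hi0 : 0 < n := by omega
    let i0 : Fin n := ⟨0, hi0⟩
    -- injectivity
    have hinj : Function.Injective T := by
      rw [← LinearMap.ker_eq_bot, LinearMap.ker_eq_bot']
      intro X hX
      have h0 : MatMaj (T 0) (T X) := by
        rw [map_zero, hX]
        exact ⟨1, rowStochastic_one, (Matrix.mul_zero 1).symm⟩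
      obtain ⟨R, hR, hXx⟩ := (hT 0 X).mpr h0
      rw [hXx, Matrix.mul_zero]
    have hsurj : Function.Surjective T := (LinearMap.injective_iff_surjective).mp hinj
    -- T maps reps to reps
    have hrepmin : ∀ a : Fin n → ℝ, ∀ Y, MatMaj (T (rep a)) Y → Y = T (rep a) := by
      intro a Y hY
      obtain ⟨X, rfl⟩ := hsurj Y
      obtain ⟨R, hR, hX⟩ := (hT _ _).mpr hY
      rw [hX, mul_rep (rowStochastic_sum hR)]
    have hTrep : ∀ a : Fin n → ℝ, T (rep a) = rep (T (rep a) i0) := fun a =>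
      (hrepmin a _ (matmaj_rep_row (T (rep a)) i0)).symm
    -- the matrix L
    set L : Matrix (Fin n) (Fin n) ℝ :=
      Matrix.of fun k j => T (rep (fun j' => if k = j' then 1 else 0)) i0 j with hLdef
    have hTrepL : ∀ a, T (rep a) = rep (a ᵥ* L) := by
      intro a
      rw [hTrep a]
      have hexp : T (rep a) = ∑ k, a k • T (rep (fun j' => if k = j' then 1 else 0)) := by
        conv_lhs => rw [rep_eq_sum a]
        rw [map_sum]
        simp only [LinearMap.map_smul]
      ext i j
      simp only [rep_apply]
      rw [hexp]
      simp [Matrix.sum_apply, Matrix.vecMul, dotProduct, hLdef]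
    -- L is a unit
    have hLunit : IsUnit L := by
      rw [← Matrix.vecMul_injective_iff_isUnit]
      intro a b hab
      have hab' : T (rep a) = T (rep b) := by
        rw [hTrepL, hTrepL]
        exact congrArg rep hab
      have := hinj hab'
      funext j
      exact congrFun (congrFun this i0) j
    have hdet : IsUnit L.det := (Matrix.isUnit_iff_isUnit_det L).mp hLunit
    -- the normalized map T₂
    let T₂ : Matrix (Fin n) (Fin n) ℝ → Matrix (Fin n) (Fin n) ℝ := fun X => T X * L⁻¹
    have hT₂app : ∀ X, T₂ X = T X * L⁻¹ := fun _ => rfl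
    have hTfromT₂ : ∀ X, T X = T₂ X * L := by
      intro X
      rw [hT₂app, Matrix.mul_assoc, Matrix.nonsing_inv_mul _ hdet, Matrix.mul_one]
    have hT₂rep : ∀ a, T₂ (rep a) = rep a := by
      intro a
      rw [hT₂app, hTrepL, rep_mul, Matrix.vecMul_vecMul, Matrix.mul_nonsing_inv _ hdet,
        Matrix.vecMul_one]
    have hT₂maj : ∀ X Y, MatMaj X Y ↔ MatMaj (T₂ X) (T₂ Y) := by
      intro X Y
      rw [hT X Y]
      constructor
      · intro h
        rw [hTfromT₂ X, hTfromT₂ Y] at h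
        exact (matmaj_mul_unit_iff hLunit).mp h
      · intro h
        rw [hTfromT₂ X, hTfromT₂ Y]
        exact (matmaj_mul_unit_iff hLunit).mpr h
    have hmajT₂ : ∀ X, MatMaj X (T₂ X) ∧ MatMaj (T₂ X) X := by
      intro X
      constructor
      · apply matmaj_of_forall_rep
        intro j
        have h2 : MatMaj (T₂ X) (T₂ (rep (T₂ X j))) := by
          rw [hT₂rep]
          exact matmaj_rep_row _ j
        exact (hT₂maj _ _).mpr h2
      · apply matmaj_of_forall_rep
        intro i
        have h2 := (hT₂maj _ _).mp (matmaj_rep_row X i)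
        rwa [hT₂rep] at h2
    -- key: on invertible matrices, T₂ acts as a permutation
    have hkey : ∀ W : Matrix (Fin n) (Fin n) ℝ, IsUnit W →
        ∃ σ : Equiv.Perm (Fin n), T₂ W = σ.permMatrix ℝ * W := by
      intro W hW
      obtain ⟨M, hM, hMW⟩ := (hmajT₂ W).1
      obtain ⟨S, hS, hSW⟩ := (hmajT₂ W).2
      have hWdet : IsUnit W.det := (Matrix.isUnit_iff_isUnit_det W).mp hW
      have hSM : S * M = 1 := by
        have h1 : W = (S * M) * W := by rw [Matrix.mul_assoc, ← hMW, ← hSW]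
        have h2 := congrArg (fun A => A * W⁻¹) h1
        rwa [Matrix.mul_nonsing_inv _ hWdet, Matrix.mul_assoc,
          Matrix.mul_nonsing_inv _ hWdet, Matrix.mul_one, eq_comm] at h2
      obtain ⟨σ, hσ⟩ := perm_of_stochastic_mul_eq_one hS hM hSM
      exact ⟨σ, by rw [hMW, hσ]⟩
    -- T₂ is affine in t along lines through 1
    have hT₂lin : ∀ (t : ℝ) (Z : Matrix (Fin n) (Fin n) ℝ),
        T₂ (1 + t • Z) = T₂ 1 + t • T₂ Z := by
      intro t Z
      simp only [hT₂app, map_add, LinearMap.map_smul, Matrix.add_mul, smul_mul_assoc]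
    -- for every Z there is a permutation
    have hZperm : ∀ Z : Matrix (Fin n) (Fin n) ℝ, ∃ σ : Equiv.Perm (Fin n),
        T₂ Z = σ.permMatrix ℝ * Z ∧ T₂ 1 = σ.permMatrix ℝ := by
      intro Z
      have hcont : Continuous fun t : ℝ => ((1 : Matrix (Fin n) (Fin n) ℝ) + t • Z).det :=
        Continuous.matrix_det (continuous_const.add (continuous_id.smul continuous_const))
      have h00 : ((1 : Matrix (Fin n) (Fin n) ℝ) + (0:ℝ) • Z).det ≠ 0 := by simp
      have hev : ∀ᶠ t in nhds (0:ℝ), ((1 : Matrix (Fin n) (Fin n) ℝ) + t • Z).det ≠ 0 :=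
        hcont.continuousAt.eventually_ne h00
      obtain ⟨ε, hε, hball⟩ := Metric.eventually_nhds_iff.mp hev
      have hIoo : ∀ t ∈ Set.Ioo (0:ℝ) ε, IsUnit ((1 : Matrix (Fin n) (Fin n) ℝ) + t • Z) := by
        intro t ht
        have hd : dist t (0:ℝ) < ε := by
          rw [Real.dist_eq, sub_zero, abs_of_pos ht.1]
          exact ht.2
        rw [Matrix.isUnit_iff_isUnit_det]
        exact isUnit_iff_ne_zero.mpr (hball hd)
      haveI : Infinite (Set.Ioo (0:ℝ) ε) := Set.Ioo.infinite hε
      have hch : ∀ t : Set.Ioo (0:ℝ) ε, ∃ σ : Equiv.Perm (Fin n),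
          T₂ (1 + (t : ℝ) • Z) = σ.permMatrix ℝ * (1 + (t : ℝ) • Z) :=
        fun t => hkey _ (hIoo t t.2)
      choose F hF using hch
      obtain ⟨t₁, t₂, hne, hFeq⟩ := Finite.exists_ne_map_eq_of_infinite F
      have e₁ := hF t₁
      have e₂ := hF t₂
      rw [← hFeq] at e₂
      set σ := F t₁ with hσdef
      have expand : ∀ t : ℝ, σ.permMatrix ℝ * (1 + t • Z) =
          σ.permMatrix ℝ + t • (σ.permMatrix ℝ * Z) := by
        intro t
        rw [Matrix.mul_add, Matrix.mul_one, mul_smul_comm]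
      have l₁ : T₂ 1 + (t₁ : ℝ) • T₂ Z = σ.permMatrix ℝ + (t₁ : ℝ) • (σ.permMatrix ℝ * Z) := by
        rw [← hT₂lin, e₁, expand]
      have l₂ : T₂ 1 + (t₂ : ℝ) • T₂ Z = σ.permMatrix ℝ + (t₂ : ℝ) • (σ.permMatrix ℝ * Z) := by
        rw [← hT₂lin, e₂, expand]
      have hts : (t₁ : ℝ) ≠ (t₂ : ℝ) := fun hc => hne (Subtype.ext hc)
      have hdiff : ((t₁ : ℝ) - t₂) • T₂ Z = ((t₁ : ℝ) - t₂) • (σ.permMatrix ℝ * Z) := by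
        calc ((t₁ : ℝ) - t₂) • T₂ Z
            = (T₂ 1 + (t₁ : ℝ) • T₂ Z) - (T₂ 1 + (t₂ : ℝ) • T₂ Z) := by
              rw [sub_smul]; abel
          _ = (σ.permMatrix ℝ + (t₁ : ℝ) • (σ.permMatrix ℝ * Z)) -
              (σ.permMatrix ℝ + (t₂ : ℝ) • (σ.permMatrix ℝ * Z)) := by rw [l₁, l₂]
          _ = ((t₁ : ℝ) - t₂) • (σ.permMatrix ℝ * Z) := by rw [sub_smul]; abel
      have hTZ : T₂ Z = σ.permMatrix ℝ * Z :=
        smul_right_injective _ (sub_ne_zero.mpr hts) hdiff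
      have hT1 : T₂ 1 = σ.permMatrix ℝ := by
        have := l₁
        rw [hTZ] at this
        exact add_right_cancel this
      exact ⟨σ, hTZ, hT1⟩
    obtain ⟨σ0, _, hσ0⟩ := hZperm 0
    refine ⟨σ0, L, hLunit, ?_⟩
    intro X
    obtain ⟨σ, hσX, hσ1⟩ := hZperm X
    have hσeq : σ = σ0 := permMatrix_injective (by rw [← hσ1, hσ0])
    rw [← hσeq, hTfromT₂ X, hσX]
  · rintro ⟨σ, L, hL, hTX⟩ X Y
    have hdet : IsUnit L.det := (Matrix.isUnit_iff_isUnit_det L).mp hL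
    constructor
    · rintro ⟨R, hR, hY⟩
      refine ⟨σ.permMatrix ℝ * R * Equiv.Perm.permMatrix ℝ σ.symm,
        rowStochastic_mul (rowStochastic_mul (rowStochastic_permMatrix σ) hR)
          (rowStochastic_permMatrix σ.symm), ?_⟩
      rw [hTX X, hTX Y, hY]
      simp only [Matrix.mul_assoc]
      rw [← Matrix.mul_assoc (Equiv.Perm.permMatrix ℝ σ.symm) (σ.permMatrix ℝ) (X * L),
        symm_mul_permMatrix, Matrix.one_mul]
    · rintro ⟨R, hR, hY⟩
      rw [hTX X, hTX Y] at hY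
      refine ⟨Equiv.Perm.permMatrix ℝ σ.symm * R * σ.permMatrix ℝ,
        rowStochastic_mul (rowStochastic_mul (rowStochastic_permMatrix σ.symm) hR)
          (rowStochastic_permMatrix σ), ?_⟩
      have h1 : σ.permMatrix ℝ * Y = R * (σ.permMatrix ℝ * X) := by
        have h2 := congrArg (fun A => A * L⁻¹) hY
        rwa [Matrix.mul_assoc (σ.permMatrix ℝ * Y) L L⁻¹, Matrix.mul_nonsing_inv _ hdet,
          Matrix.mul_one, Matrix.mul_assoc R _ L⁻¹,
          Matrix.mul_assoc (σ.permMatrix ℝ * X) L L⁻¹, Matrix.mul_nonsing_inv _ hdet,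
          Matrix.mul_one] at h2
      have h3 := congrArg (fun A => Equiv.Perm.permMatrix ℝ σ.symm * A) h1
      rw [← Matrix.mul_assoc _ _ Y, symm_mul_permMatrix, Matrix.one_mul] at h3
      rw [h3]
      simp only [Matrix.mul_assoc]
end

section
/- If A ∈ M_n(ℝ) is such that both A and A⁻¹ are row stochastic, then A is a permutation matrix. -/
open Matrix

theorem stmt_19 {n : ℕ} (A : Matrix (Fin n) (Fin n) ℝ)
    (hA : RowStochastic A) (hAi : RowStochastic A⁻¹) :
    ∃ σ : Equiv.Perm (Fin n), A = σ.permMatrix ℝ := by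
  rcases Nat.eq_zero_or_pos n with h0 | hn
  · subst h0
    exact ⟨1, by ext i; exact i.elim0⟩
  obtain ⟨hApos, hArow⟩ := hA
  obtain ⟨hBpos, hBrow⟩ := hAi
  have hdet : IsUnit A.det := by
    by_contra h
    rw [Matrix.nonsing_inv_apply_not_isUnit A h] at hBrow
    have := congrFun hBrow ⟨0, hn⟩
    simp [Matrix.zero_mulVec] at this
  set B := A⁻¹ with hB
  have hAB : A * B = 1 := Matrix.mul_nonsing_inv A hdet
  -- diagonal of A*B equals 1, off-diagonal 0
  have hdiag : ∀ i, ∑ j, A i j * B j i = 1 := by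
    intro i
    have := congrFun (congrFun hAB i) i
    simpa [Matrix.mul_apply, Matrix.one_apply] using this
  have hoff : ∀ i k, i ≠ k → ∀ j, A i j * B j k = 0 := by
    intro i k hik j
    have h1 : ∑ j, A i j * B j k = 0 := by
      have := congrFun (congrFun hAB i) k
      simpa [Matrix.mul_apply, Matrix.one_apply, hik] using this
    have h2 : ∀ j ∈ Finset.univ, 0 ≤ A i j * B j k := fun j _ =>
      mul_nonneg (hApos i j) (hBpos j k)
    exact (Finset.sum_eq_zero_iff_of_nonneg h2).mp h1 j (Finset.mem_univ j)
  -- choose for each i a column with positive product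
  have hex : ∀ i, ∃ j, 0 < A i j * B j i := by
    intro i
    by_contra h
    push_neg at h
    have : ∀ j ∈ Finset.univ, A i j * B j i = 0 := fun j _ =>
      le_antisymm (h j) (mul_nonneg (hApos i j) (hBpos j i))
    have := Finset.sum_eq_zero this
    rw [hdiag i] at this
    exact one_ne_zero this
  choose f hf using hex
  have hinj : Function.Injective f := by
    intro i1 i2 he
    by_contra hne
    have h1 : 0 < B (f i1) i1 := (mul_pos_iff.mp (hf i1)).resolve_right
      (fun h => absurd h.1 (not_lt.mpr (hApos i1 (f i1)))) |>.2
    have h2 : 0 < A i2 (f i2) := (mul_pos_iff.mp (hf i2)).resolve_right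
      (fun h => absurd h.1 (not_lt.mpr (hApos i2 (f i2)))) |>.1
    have := hoff i2 i1 (Ne.symm hne) (f i2)
    rw [he] at h1
    exact absurd this (ne_of_gt (mul_pos h2 h1))
  let σ : Equiv.Perm (Fin n) := Equiv.ofBijective f (Finite.injective_iff_bijective.mp hinj)
  refine ⟨σ, ?_⟩
  have hBpos' : ∀ i, 0 < B (f i) i := fun i =>
    ((mul_pos_iff.mp (hf i)).resolve_right
      (fun h => absurd h.1 (not_lt.mpr (hApos i (f i))))).2
  have hzero : ∀ i k, k ≠ f i → A i k = 0 := by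
    intro i k hk
    obtain ⟨i', hi'⟩ := σ.surjective k
    have hki' : k = f i' := hi'.symm
    have hii' : i ≠ i' := fun h => hk (by rw [h, hki'])
    have := hoff i i' hii' k
    have hb : 0 < B k i' := by rw [hki']; exact hBpos' i'
    rcases mul_eq_zero.mp this with h | h
    · exact h
    · exact absurd h (ne_of_gt hb)
  have hone : ∀ i, A i (f i) = 1 := by
    intro i
    have hsum := congrFun hArow i
    simp only [Matrix.mulVec, dotProduct, Pi.one_apply, mul_one] at hsum
    rw [← hsum]
    symm
    rw [Finset.sum_eq_single (f i)]
    · intro j _ hj; exact hzero i j hj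
    · intro h; exact absurd (Finset.mem_univ _) h
  ext i j
  simp only [Equiv.Perm.permMatrix, PEquiv.toMatrix_apply, Equiv.toPEquiv_apply,
    Option.mem_def, Option.some.injEq]
  by_cases hj : j = f i
  · subst hj
    simp [σ, Equiv.ofBijective, hone i]
  · rw [hzero i j hj]
    have : ¬ (σ i = j) := fun h => hj (by simpa [σ, Equiv.ofBijective] using h.symm)
    simp [this]
end
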